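/- If operators X_0,...,X_n and X̂_0,...,X̂_n on a space with a trace satisfy the hat relation t^{θ(α>β)} X_β X_α − t^{θ(α<β)} X_α X_β = X_α X̂_β − X̂_α X_β for all 0 ≤ α, β ≤ n, then the vector ∑_σ tr(X_{σ_1}···X_{σ_L}) |σ⟩ is annihilated by the ASEP Markov matrix H = ∑_{i∈ℤ_L} H^{loc}_{i,i+1}. -/

import Mathlib

set_option linter.unusedSectionVars false

section stmt10aux

variable {A : Type*} [Ring A] [Algebra ℂ A]

private lemma stmt10_tr_prod_rot1 (tr : A →ₗ[ℂ] ℂ) (htr : ∀ a b : A, tr (a * b) = tr (b * a))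
    (l : List A) : tr (l.rotate 1).prod = tr l.prod := by
  cases l with
  | nil => simp
  | cons a s =>
      have : (a :: s).rotate 1 = s ++ [a] := by
        simpa using List.rotate_cons_succ s a 0
      rw [this]
      simp [htr]

private lemma stmt10_ofFn_rot1 {α : Type*} {L : ℕ} [NeZero L] (g : Fin L → α) :
    List.ofFn (fun j => g (j + 1)) = (List.ofFn g).rotate 1 := by
  apply List.ext_get
  · simp
  · intro m h1 h2
    rw [List.get_ofFn, List.get_rotate]
    rw [List.get_ofFn]
    congr 1
    simp only [List.length_ofFn] at *
    ext
    simp [Fin.add_def]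

private lemma stmt10_tr_rot1 {L : ℕ} [NeZero L] (tr : A →ₗ[ℂ] ℂ)
    (htr : ∀ a b : A, tr (a * b) = tr (b * a)) (g : Fin L → A) :
    tr (List.ofFn (fun j => g (j + 1))).prod = tr (List.ofFn g).prod := by
  rw [stmt10_ofFn_rot1, stmt10_tr_prod_rot1 tr htr]

open Fin.NatCast in
private lemma stmt10_tr_rotK {L : ℕ} [NeZero L] (tr : A →ₗ[ℂ] ℂ)
    (htr : ∀ a b : A, tr (a * b) = tr (b * a)) (k : ℕ) (g : Fin L → A) :
    tr (List.ofFn (fun j => g (j + (k : Fin L)))).prod = tr (List.ofFn g).prod := by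
  induction k with
  | zero => simp
  | succ k ih =>
      have h := stmt10_tr_rot1 tr htr (fun j' => g (j' + (k : Fin L)))
      have hadd : ∀ j : Fin L, j + ((k+1 : ℕ) : Fin L) = (j + 1) + (k : Fin L) := by
        intro j; rw [Nat.cast_add, Nat.cast_one, ← add_assoc, add_right_comm]
      simp only [hadd]
      exact h.trans ih

open Fin.NatCast in
private lemma stmt10_tr_rotF {L : ℕ} [NeZero L] (tr : A →ₗ[ℂ] ℂ)
    (htr : ∀ a b : A, tr (a * b) = tr (b * a)) (i : Fin L) (g : Fin L → A) :
    tr (List.ofFn (fun j => g (j + i))).prod = tr (List.ofFn g).prod := by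
  have := stmt10_tr_rotK tr htr i.val g
  rwa [Fin.cast_val_eq_self] at this

private lemma stmt10_expand_prod {m : ℕ} (f : Fin (m+2) → A) :
    (List.ofFn f).prod = f 0 * (f 1 * (List.ofFn fun j : Fin m => f j.succ.succ).prod) := by
  rw [List.ofFn_succ, List.prod_cons, List.ofFn_succ, List.prod_cons, Fin.succ_zero_eq_one]

private lemma stmt10_core {n m : ℕ} (t : ℂ) (tr : A →ₗ[ℂ] ℂ)
    (X Xhat : Fin (n + 1) → A)
    (hhat : ∀ α β : Fin (n + 1),
      t ^ (if β < α then 1 else 0) • (X β * X α) - t ^ (if α < β then 1 else 0) • (X α * X β)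
        = X α * Xhat β - Xhat α * X β)
    (τ : Fin (m+2) → Fin (n+1)) :
    t ^ (if τ 1 < τ 0 then 1 else 0) * tr (List.ofFn fun j => X (τ (Equiv.swap 0 1 j))).prod
      - t ^ (if τ 0 < τ 1 then 1 else 0) * tr (List.ofFn fun j => X (τ j)).prod
    = tr (List.ofFn (Function.update (fun j => X (τ j)) 1 (Xhat (τ 1)))).prod
      - tr (List.ofFn (Function.update (fun j => X (τ j)) 0 (Xhat (τ 0)))).prod := by
  have h01 : (0 : Fin (m+2)) ≠ 1 := by simp [Fin.ext_iff]
  have hne0 : ∀ j : Fin m, (j.succ.succ : Fin (m+2)) ≠ 0 := fun j => Fin.succ_ne_zero _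
  have hne1 : ∀ j : Fin m, (j.succ.succ : Fin (m+2)) ≠ 1 := fun j => by simp [Fin.ext_iff]
  rw [stmt10_expand_prod, stmt10_expand_prod, stmt10_expand_prod, stmt10_expand_prod]
  have e1 : (fun j : Fin m => X (τ ((Equiv.swap (0:Fin (m+2)) 1) j.succ.succ)))
      = fun j : Fin m => X (τ j.succ.succ) := by
    funext j; rw [Equiv.swap_apply_of_ne_of_ne (hne0 j) (hne1 j)]
  have e2 : (fun j : Fin m => Function.update (fun j' => X (τ j')) 1 (Xhat (τ 1)) j.succ.succ)
      = fun j : Fin m => X (τ j.succ.succ) := by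
    funext j; rw [Function.update_of_ne (hne1 j)]
  have e3 : (fun j : Fin m => Function.update (fun j' => X (τ j')) 0 (Xhat (τ 0)) j.succ.succ)
      = fun j : Fin m => X (τ j.succ.succ) := by
    funext j; rw [Function.update_of_ne (hne0 j)]
  simp only [e1, e2, e3, Equiv.swap_apply_left, Equiv.swap_apply_right,
    Function.update_self, Function.update_of_ne h01, Function.update_of_ne h01.symm]
  set R := (List.ofFn fun j : Fin m => X (τ j.succ.succ)).prod with hR
  have key := congrArg (fun a => tr (a * R)) (hhat (τ 0) (τ 1))
  simp only [sub_mul, smul_mul_assoc, map_sub, map_smul, smul_eq_mul, mul_assoc] at key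
  exact key

private lemma stmt10_swap_shift {m : ℕ} (i j : Fin (m+2)) :
    Equiv.swap i (i+1) (j + i) = (Equiv.swap 0 1 j) + i := by
  rcases eq_or_ne j 0 with rfl | h0
  · rw [zero_add, Equiv.swap_apply_left, Equiv.swap_apply_left]; exact add_comm i 1
  rcases eq_or_ne j 1 with rfl | h1
  · rw [add_comm 1 i, Equiv.swap_apply_right, Equiv.swap_apply_right, zero_add]
  · have hji : j + i ≠ i := fun h => h0 (by
      have := h.trans (zero_add i).symm
      exact add_right_cancel this)
    have hji1 : j + i ≠ i + 1 := fun h => h1 (by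
      rw [add_comm i 1] at h
      exact add_right_cancel h)
    rw [Equiv.swap_apply_of_ne_of_ne hji hji1, Equiv.swap_apply_of_ne_of_ne h0 h1]

private lemma stmt10_update_shift0 {m : ℕ} (i : Fin (m+2)) (h : Fin (m+2) → A) (a : A) :
    (fun j => Function.update h i a (j + i)) = Function.update (fun j' => h (j' + i)) 0 a := by
  funext j
  rcases eq_or_ne j 0 with rfl | h0
  · rw [zero_add, Function.update_self, Function.update_self]
  · have : j + i ≠ i := fun hh => h0 (add_right_cancel (hh.trans (zero_add i).symm))
    rw [Function.update_of_ne this, Function.update_of_ne h0]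

private lemma stmt10_update_shift1 {m : ℕ} (i : Fin (m+2)) (h : Fin (m+2) → A) (a : A) :
    (fun j => Function.update h (i+1) a (j + i)) = Function.update (fun j' => h (j' + i)) 1 a := by
  funext j
  rcases eq_or_ne j 1 with rfl | h1
  · rw [add_comm 1 i, Function.update_self, Function.update_self]
  · have : j + i ≠ i + 1 := fun hh => h1 (by rw [add_comm i 1] at hh; exact add_right_cancel hh)
    rw [Function.update_of_ne this, Function.update_of_ne h1]

end stmt10aux

/-- If operators `X_0,…,X_n` and `X̂_0,…,X̂_n` in an algebra with a cyclic trace satisfy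
the hat relation `t^{θ(α>β)} X_β X_α − t^{θ(α<β)} X_α X_β = X_α X̂_β − X̂_α X_β`, then the
vector `∑_σ tr(X_{σ_1}⋯X_{σ_L}) |σ⟩` is annihilated by the ASEP Markov matrix
`H = ∑_{i∈ℤ_L} H^{loc}_{i,i+1}`: each component of `H` applied to this vector vanishes. -/
theorem stmt10 {A : Type*} [Ring A] [Algebra ℂ A] {n L : ℕ} [NeZero L]
    (t : ℂ) (tr : A →ₗ[ℂ] ℂ) (htr : ∀ a b : A, tr (a * b) = tr (b * a))
    (X Xhat : Fin (n + 1) → A)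
    (hhat : ∀ α β : Fin (n + 1),
      t ^ (if β < α then 1 else 0) • (X β * X α) - t ^ (if α < β then 1 else 0) • (X α * X β)
        = X α * Xhat β - Xhat α * X β) :
    ∀ σ : Fin L → Fin (n + 1),
      ∑ i : Fin L,
        (t ^ (if σ (i + 1) < σ i then 1 else 0) *
            tr ((List.ofFn fun j => X ((σ ∘ Equiv.swap i (i + 1)) j)).prod)
          - t ^ (if σ i < σ (i + 1) then 1 else 0) *
            tr ((List.ofFn fun j => X (σ j)).prod)) = 0 := by
  obtain ⟨M, rfl⟩ : ∃ M, L = M + 1 :=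
    ⟨L - 1, (Nat.succ_pred_eq_of_pos (Nat.pos_of_ne_zero (NeZero.ne L))).symm⟩
  cases M with
  | zero =>
      intro σ
      apply Finset.sum_eq_zero
      intro i _
      have h1 : i + 1 = i := by ext; omega
      rw [h1, Equiv.swap_self]
      simp
  | succ m =>
      intro σ
      set S : Fin (m + 2) → ℂ :=
        fun i => tr (List.ofFn (Function.update (fun j => X (σ j)) i (Xhat (σ i)))).prod with hS
      have key : ∀ i : Fin (m + 2),
          (t ^ (if σ (i + 1) < σ i then 1 else 0) *
              tr ((List.ofFn fun j => X ((σ ∘ Equiv.swap i (i + 1)) j)).prod)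
            - t ^ (if σ i < σ (i + 1) then 1 else 0) *
              tr ((List.ofFn fun j => X (σ j)).prod)) = S (i + 1) - S i := by
        intro i
        have hcore := stmt10_core t tr X Xhat hhat (fun j => σ (j + i))
        have h1i : (1 : Fin (m+2)) + i = i + 1 := add_comm 1 i
        simp only [zero_add, h1i] at hcore
        simp only [← stmt10_swap_shift] at hcore
        have rw1 := stmt10_tr_rotF tr htr i (fun j => X (σ (Equiv.swap i (i+1) j)))
        have rw2 := stmt10_tr_rotF tr htr i (fun j => X (σ j))
        have rw3 := stmt10_tr_rotF tr htr i
          (Function.update (fun j => X (σ j)) (i+1) (Xhat (σ (i+1))))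
        have rw4 := stmt10_tr_rotF tr htr i
          (Function.update (fun j => X (σ j)) i (Xhat (σ i)))
        simp only [stmt10_update_shift1] at rw3
        simp only [stmt10_update_shift0] at rw4
        simp only [rw1, rw2, rw3, rw4] at hcore
        exact hcore
      calc ∑ i : Fin (m + 2),
            (t ^ (if σ (i + 1) < σ i then 1 else 0) *
                tr ((List.ofFn fun j => X ((σ ∘ Equiv.swap i (i + 1)) j)).prod)
              - t ^ (if σ i < σ (i + 1) then 1 else 0) *
                tr ((List.ofFn fun j => X (σ j)).prod))
          = ∑ i : Fin (m + 2), (S (i + 1) - S i) := Finset.sum_congr rfl fun i _ => key i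
        _ = (∑ i : Fin (m + 2), S (i + 1)) - ∑ i : Fin (m + 2), S i := Finset.sum_sub_distrib _ _
        _ = 0 := by
            rw [Fintype.sum_equiv (Equiv.addRight (1 : Fin (m+2))) (fun i => S (i + 1)) S
              (fun i => rfl), sub_self]
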